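/- Let X be a finite connected simple graph, let G be a subgroup of Aut(X), and let N be a normal subgroup of G such that X is an N-regular covering of the quotient graph X_N (that is, N acts semiregularly on V(X) and, for every vertex v of X, the orbit projection maps the neighborhood of v in X bijectively onto the neighborhood of the orbit of v in X_N). Since N is normal in G, G permutes the N-orbits and hence acts on X_N by automorphisms, with N acting trivially, so that G/N acts on X_N. Then X is G-half-arc-transitive if and only if X_N is (G/N)-half-arc-transitive. -/

import Mathlib

namespace HAT

variable {V : Type*} {W : Type*}

/-- The automorphism group of a simple graph, as a subgroup of the permutation
group of the vertex set. -/
def autSubgroup (X : SimpleGraph V) : Subgroup (Equiv.Perm V) where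
  carrier := {g | ∀ u v : V, X.Adj (g u) (g v) ↔ X.Adj u v}
  one_mem' := by intro u v; simp
  mul_mem' := by
    intro a b ha hb u v
    simp only [Equiv.Perm.mul_apply]
    rw [ha, hb]
  inv_mem' := by
    intro a ha u v
    have h := (ha (a⁻¹ u) (a⁻¹ v)).symm
    simpa using h

/-- A subgroup of the permutation group of the vertex set acts transitively on vertices. -/
def VertexTransitive (G : Subgroup (Equiv.Perm V)) : Prop :=
  ∀ u v : V, ∃ g ∈ G, g u = v

/-- `G` acts transitively on the edges of `X`. -/
def EdgeTransitive (X : SimpleGraph V) (G : Subgroup (Equiv.Perm V)) : Prop :=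
  ∀ ⦃u v x y : V⦄, X.Adj u v → X.Adj x y →
    ∃ g ∈ G, (g u = x ∧ g v = y) ∨ (g u = y ∧ g v = x)

/-- `G` acts transitively on the arcs of `X`. -/
def ArcTransitive (X : SimpleGraph V) (G : Subgroup (Equiv.Perm V)) : Prop :=
  ∀ ⦃u v x y : V⦄, X.Adj u v → X.Adj x y → ∃ g ∈ G, g u = x ∧ g v = y

/-- `G` acts sharply transitively (regularly) on the arcs of `X`. -/
def ArcRegular (X : SimpleGraph V) (G : Subgroup (Equiv.Perm V)) : Prop :=
  ∀ ⦃u v x y : V⦄, X.Adj u v → X.Adj x y →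
    ∃! g : G, (g : Equiv.Perm V) u = x ∧ (g : Equiv.Perm V) v = y

/-- `X` is `G`-half-arc-transitive. -/
def HalfArcTransitive (X : SimpleGraph V) (G : Subgroup (Equiv.Perm V)) : Prop :=
  VertexTransitive G ∧ EdgeTransitive X G ∧ ¬ ArcTransitive X G

/-- `X` is regular of degree `k`. -/
def RegularOfDegree (X : SimpleGraph V) (k : ℕ) : Prop :=
  ∀ v : V, Nat.card (X.neighborSet v) = k

/-- A group of permutations acts semiregularly: all point stabilizers are trivial. -/
def Semiregular (N : Subgroup (Equiv.Perm V)) : Prop :=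
  ∀ g ∈ N, (∃ v : V, g v = v) → g = 1

/-- A graph is a Cayley graph iff its automorphism group contains a subgroup
acting regularly (sharply transitively) on the vertices. -/
def IsCayleyGraph (X : SimpleGraph V) : Prop :=
  ∃ H : Subgroup (Equiv.Perm V), H ≤ autSubgroup X ∧
    ∀ u v : V, ∃! h : H, (h : Equiv.Perm V) u = v

/-- The set of `N`-orbits on the vertex set. -/
abbrev Orbits (N : Subgroup (Equiv.Perm V)) : Type _ := Quotient (MulAction.orbitRel N V)

/-- The `N`-orbit of a vertex. -/
def orbitMk (N : Subgroup (Equiv.Perm V)) (v : V) : Orbits N :=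
  Quotient.mk (MulAction.orbitRel N V) v

/-- The quotient graph `X_N`: vertices are the `N`-orbits, two orbits being adjacent
iff some vertex of one is adjacent in `X` to some vertex of the other. -/
def quotientGraph (X : SimpleGraph V) (N : Subgroup (Equiv.Perm V)) :
    SimpleGraph (Orbits N) :=
  SimpleGraph.fromRel (fun B C => ∃ u v : V, orbitMk N u = B ∧ orbitMk N v = C ∧ X.Adj u v)

/-- `X` is an `N`-regular covering of the quotient graph `X_N`: `N` is semiregular and
the orbit projection maps each neighbourhood bijectively onto the neighbourhood of the
corresponding orbit. -/
def IsRegularCover (X : SimpleGraph V) (N : Subgroup (Equiv.Perm V)) : Prop :=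
  Semiregular N ∧
    ∀ v : V, Set.BijOn (orbitMk N) (X.neighborSet v)
      ((quotientGraph X N).neighborSet (orbitMk N v))

/-- The permutations of the orbit set induced by elements of `G` (this is the image of
the natural action of `G/N` when `N` is normal in `G`). -/
def inducedQuotSubgroup (G N : Subgroup (Equiv.Perm V)) :
    Subgroup (Equiv.Perm (Orbits N)) where
  carrier := {σ | ∃ g ∈ G, ∀ u : V, σ (orbitMk N u) = orbitMk N (g u)}
  one_mem' := ⟨1, G.one_mem, fun u => by simp⟩
  mul_mem' := by
    rintro σ τ ⟨g, hg, hgs⟩ ⟨h, hh, hhs⟩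
    refine ⟨g * h, G.mul_mem hg hh, fun u => ?_⟩
    simp [Equiv.Perm.mul_apply, hhs u, hgs (h u)]
  inv_mem' := by
    rintro σ ⟨g, hg, hgs⟩
    refine ⟨g⁻¹, G.inv_mem hg, fun u => ?_⟩
    have h1 := hgs (g⁻¹ u)
    rw [show g (g⁻¹ u) = u from Equiv.apply_symm_apply g u] at h1
    rw [← h1, show σ⁻¹ (σ (orbitMk N (g⁻¹ u))) = orbitMk N (g⁻¹ u) from
      Equiv.symm_apply_apply σ _]

/-- A voltage assignment on the arcs of `Y` with values in the group `K`. -/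
def IsVoltage (Y : SimpleGraph W) (K : Type*) [Group K] (ξ : W → W → K) : Prop :=
  ∀ u v : W, Y.Adj u v → ξ v u = (ξ u v)⁻¹

/-- The derived graph `Y ×_ξ K` of a voltage assignment `ξ`. -/
def derivedGraph (Y : SimpleGraph W) {K : Type*} [Group K] (ξ : W → W → K) :
    SimpleGraph (W × K) :=
  SimpleGraph.fromRel (fun a b => Y.Adj a.1 b.1 ∧ b.2 = ξ a.1 b.1 * a.2)

/-- The graph `X(r; m, n)`: vertices `Z_m × Z_n`, with `(i,j)` adjacent to
`(i+1, j ± r^i)`. -/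
def XG (m : ℕ) {n : ℕ} (r : (ZMod n)ˣ) : SimpleGraph (ZMod m × ZMod n) :=
  SimpleGraph.fromRel (fun a b =>
    b.1 = a.1 + 1 ∧
      (b.2 = a.2 + (r : ZMod n) ^ (a.1.val) ∨ b.2 = a.2 - (r : ZMod n) ^ (a.1.val)))

/-- The Praeger–Xu graph `C(2;p,2)`: vertices `Z_p × Z_2 × Z_2`, with `(i,(x,y))`
adjacent to `(i+1,(y,z))`. -/
def Cp22 (p : ℕ) : SimpleGraph (ZMod p × ZMod 2 × ZMod 2) :=
  SimpleGraph.fromRel (fun a b => b.1 = a.1 + 1 ∧ b.2.1 = a.2.2)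

/-- The lexicographic product `C_n[2K_1]`: vertices `Z_n × Z_2`, with `(i,x)`
adjacent to `(j,y)` iff `j = i ± 1`. -/
def cyc2K1 (n : ℕ) : SimpleGraph (ZMod n × ZMod 2) :=
  SimpleGraph.fromRel (fun a b => b.1 = a.1 + 1)

/-- The wreath graph `W(6,2)`: vertices `Z_6 × Z_2`, with `(i,x)` adjacent to `(i+1,y)`. -/
def W62 : SimpleGraph (ZMod 6 × ZMod 2) :=
  SimpleGraph.fromRel (fun a b => b.1 = a.1 + 1)

/-- Base relation for the Rose Window graph `R_6(5,4)`: `inl i` is `S_i`, `inr i` is `Q_i`. -/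
def roseR : (ZMod 6 ⊕ ZMod 6) → (ZMod 6 ⊕ ZMod 6) → Prop
  | Sum.inl i, Sum.inl j => j = i + 1
  | Sum.inl i, Sum.inr j => j = i ∨ i = j + 5
  | Sum.inr i, Sum.inr j => j = i + 4
  | Sum.inr _, Sum.inl _ => False

/-- The Rose Window graph `R_6(5,4)`. -/
def roseWindow : SimpleGraph (ZMod 6 ⊕ ZMod 6) := SimpleGraph.fromRel roseR

/-- An elementary abelian `q`-group. -/
def IsElementaryAbelian (q : ℕ) (H : Type*) [Group H] : Prop :=
  (∀ a b : H, a * b = b * a) ∧ ∀ x : H, x ≠ 1 → orderOf x = q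

section Aux

variable {V : Type*} (X : SimpleGraph V) (N G : Subgroup (Equiv.Perm V))

lemma exists_orbit_rep (B : Orbits N) : ∃ u : V, orbitMk N u = B :=
  Quotient.exists_rep B

lemma orbitMk_eq_iff {u v : V} :
    orbitMk N u = orbitMk N v ↔ ∃ n ∈ N, n v = u := by
  unfold orbitMk
  rw [Quotient.eq, MulAction.orbitRel_apply, MulAction.mem_orbit_iff]
  constructor
  · rintro ⟨⟨n, hn⟩, h⟩
    exact ⟨n, hn, h⟩
  · rintro ⟨n, hn, h⟩
    exact ⟨⟨n, hn⟩, h⟩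

lemma quot_adj_elim {B C : Orbits N} (h : (quotientGraph X N).Adj B C) :
    ∃ u v : V, orbitMk N u = B ∧ orbitMk N v = C ∧ X.Adj u v := by
  simp only [quotientGraph, SimpleGraph.fromRel_adj] at h
  obtain ⟨hne, h | h⟩ := h
  · exact h
  · obtain ⟨u, v, hu, hv, hadj⟩ := h
    exact ⟨v, u, hv, hu, hadj.symm⟩

lemma adj_orbit (hcover : IsRegularCover X N) {u v : V} (h : X.Adj u v) :
    (quotientGraph X N).Adj (orbitMk N u) (orbitMk N v) :=
  (hcover.2 u).mapsTo h

lemma adj_unique (hcover : IsRegularCover X N) {u v v' : V} (h : X.Adj u v)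
    (h' : X.Adj u v') (he : orbitMk N v = orbitMk N v') : v = v' :=
  (hcover.2 u).injOn h h' he

lemma orbitRel_map (hnorm : ∀ g ∈ G, ∀ n ∈ N, g * n * g⁻¹ ∈ N)
    {g : Equiv.Perm V} (hg : g ∈ G) :
    ∀ a b : V, (MulAction.orbitRel N V) a b →
      (MulAction.orbitRel N V) (g a) (g b) := by
  intro a b hab
  rw [MulAction.orbitRel_apply, MulAction.mem_orbit_iff] at hab ⊢
  obtain ⟨⟨n, hn⟩, h⟩ := hab
  refine ⟨⟨g * n * g⁻¹, hnorm g hg n hn⟩, ?_⟩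
  show (g * n * g⁻¹) (g b) = g a
  simp only [Equiv.Perm.mul_apply, Equiv.Perm.inv_def, Equiv.symm_apply_apply]
  have : n b = a := h
  rw [this]

/-- The permutation of orbits induced by `g ∈ G`. -/
def indPerm (hnorm : ∀ g ∈ G, ∀ n ∈ N, g * n * g⁻¹ ∈ N)
    (g : Equiv.Perm V) (hg : g ∈ G) : Equiv.Perm (Orbits N) where
  toFun := Quotient.map (fun v => g v) (orbitRel_map N G hnorm hg)
  invFun := Quotient.map (fun v => g⁻¹ v) (orbitRel_map N G hnorm (G.inv_mem hg))
  left_inv := by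
    intro B
    obtain ⟨u, rfl⟩ := exists_orbit_rep N B
    show orbitMk N (g⁻¹ (g u)) = orbitMk N u
    simp
  right_inv := by
    intro B
    obtain ⟨u, rfl⟩ := exists_orbit_rep N B
    show orbitMk N (g (g⁻¹ u)) = orbitMk N u
    simp

@[simp] lemma indPerm_apply (hnorm : ∀ g ∈ G, ∀ n ∈ N, g * n * g⁻¹ ∈ N)
    {g : Equiv.Perm V} (hg : g ∈ G) (u : V) :
    indPerm N G hnorm g hg (orbitMk N u) = orbitMk N (g u) := rfl

lemma indPerm_mem (hnorm : ∀ g ∈ G, ∀ n ∈ N, g * n * g⁻¹ ∈ N)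
    {g : Equiv.Perm V} (hg : g ∈ G) :
    indPerm N G hnorm g hg ∈ inducedQuotSubgroup G N :=
  ⟨g, hg, fun u => rfl⟩

/-- Lifting an arc-mapping from the quotient to `X`. -/
lemma lift_arc (hG : G ≤ autSubgroup X) (hNG : N ≤ G)
    (hcover : IsRegularCover X N) {u v x y : V} (huv : X.Adj u v) (hxy : X.Adj x y)
    {g : Equiv.Perm V} (hg : g ∈ G)
    (h1 : orbitMk N (g u) = orbitMk N x) (h2 : orbitMk N (g v) = orbitMk N y) :
    ∃ h ∈ G, h u = x ∧ h v = y := by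
  obtain ⟨n, hn, hngu⟩ := (orbitMk_eq_iff N).mp h1.symm
  have hmem : n * g ∈ G := G.mul_mem (hNG hn) hg
  have hux : (n * g) u = x := hngu
  refine ⟨n * g, hmem, hux, ?_⟩
  have hadj : X.Adj ((n * g) u) ((n * g) v) := (hG hmem u v).mpr huv
  rw [hux] at hadj
  have horb : orbitMk N ((n * g) v) = orbitMk N y := by
    rw [← h2]
    exact (orbitMk_eq_iff N).mpr ⟨n, hn, rfl⟩
  exact adj_unique X N hcover hadj hxy horb

lemma arcTrans_of_quot (hG : G ≤ autSubgroup X) (hNG : N ≤ G)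
    (hcover : IsRegularCover X N)
    (hat : ArcTransitive (quotientGraph X N) (inducedQuotSubgroup G N)) :
    ArcTransitive X G := by
  intro u v x y huv hxy
  obtain ⟨σ, ⟨g, hg, hgs⟩, hσu, hσv⟩ := hat (adj_orbit X N hcover huv) (adj_orbit X N hcover hxy)
  exact lift_arc X N G hG hNG hcover huv hxy hg
    (by rw [← hgs u, hσu]) (by rw [← hgs v, hσv])

lemma edgeTrans_of_quot (hG : G ≤ autSubgroup X) (hNG : N ≤ G)
    (hcover : IsRegularCover X N)
    (het : EdgeTransitive (quotientGraph X N) (inducedQuotSubgroup G N)) :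
    EdgeTransitive X G := by
  intro u v x y huv hxy
  obtain ⟨σ, ⟨g, hg, hgs⟩, hc⟩ := het (adj_orbit X N hcover huv) (adj_orbit X N hcover hxy)
  rcases hc with ⟨h1, h2⟩ | ⟨h1, h2⟩
  · obtain ⟨h, hh, hhs⟩ := lift_arc X N G hG hNG hcover huv hxy hg
      (by rw [← hgs u, h1]) (by rw [← hgs v, h2])
    exact ⟨h, hh, Or.inl hhs⟩
  · obtain ⟨h, hh, hhs⟩ := lift_arc X N G hG hNG hcover huv hxy.symm hg
      (by rw [← hgs u, h1]) (by rw [← hgs v, h2])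
    exact ⟨h, hh, Or.inr hhs⟩

end Aux

/-- For a connected graph `X`, a group `G ≤ Aut X`, and a normal subgroup
`N ⊴ G` such that `X` is an `N`-regular covering of `X_N`, the graph `X` is
`G`-half-arc-transitive iff `X_N` is `(G/N)`-half-arc-transitive. -/
theorem stmt0 {V : Type*} [Fintype V] (X : SimpleGraph V) (hconn : X.Connected)
    (G N : Subgroup (Equiv.Perm V)) (hG : G ≤ autSubgroup X) (hNG : N ≤ G)
    (hnorm : ∀ g ∈ G, ∀ n ∈ N, g * n * g⁻¹ ∈ N)
    (hcover : IsRegularCover X N) :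
    HalfArcTransitive X G ↔
      HalfArcTransitive (quotientGraph X N) (inducedQuotSubgroup G N) := by
  constructor
  · rintro ⟨hvt, het, hnat⟩
    refine ⟨?_, ?_, ?_⟩
    · intro B C
      obtain ⟨u, rfl⟩ := exists_orbit_rep N B
      obtain ⟨v, rfl⟩ := exists_orbit_rep N C
      obtain ⟨g, hg, hguv⟩ := hvt u v
      exact ⟨indPerm N G hnorm g hg, indPerm_mem N G hnorm hg, by
        rw [indPerm_apply, hguv]⟩
    · intro B C D E hBC hDE
      obtain ⟨u, v, rfl, rfl, huv⟩ := quot_adj_elim X N hBC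
      obtain ⟨x, y, rfl, rfl, hxy⟩ := quot_adj_elim X N hDE
      obtain ⟨g, hg, hc⟩ := het huv hxy
      refine ⟨indPerm N G hnorm g hg, indPerm_mem N G hnorm hg, ?_⟩
      rcases hc with ⟨h1, h2⟩ | ⟨h1, h2⟩
      · exact Or.inl ⟨by rw [indPerm_apply, h1], by rw [indPerm_apply, h2]⟩
      · exact Or.inr ⟨by rw [indPerm_apply, h1], by rw [indPerm_apply, h2]⟩
    · intro hat
      exact hnat (arcTrans_of_quot X N G hG hNG hcover hat)
  · rintro ⟨hvt, het, hnat⟩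
    refine ⟨?_, edgeTrans_of_quot X N G hG hNG hcover het, ?_⟩
    · intro u v
      obtain ⟨σ, ⟨g, hg, hgs⟩, hσ⟩ := hvt (orbitMk N u) (orbitMk N v)
      have h1 : orbitMk N (g u) = orbitMk N v := by rw [← hgs u, hσ]
      obtain ⟨n, hn, hngu⟩ := (orbitMk_eq_iff N).mp h1.symm
      exact ⟨n * g, G.mul_mem (hNG hn) hg, hngu⟩
    · intro hat
      refine hnat ?_
      intro B C D E hBC hDE
      obtain ⟨u, v, rfl, rfl, huv⟩ := quot_adj_elim X N hBC
      obtain ⟨x, y, rfl, rfl, hxy⟩ := quot_adj_elim X N hDE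
      obtain ⟨g, hg, h1, h2⟩ := hat huv hxy
      exact ⟨indPerm N G hnorm g hg, indPerm_mem N G hnorm hg,
        by rw [indPerm_apply, h1], by rw [indPerm_apply, h2]⟩

end HAT
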